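/- Let L be a compact regular frame and P ⊆ L a basis of L closed under binary meets and binary joins. If b ∈ L, U ⊆ P and b ≺ sSup U, then either b = ⊥ or there exist n ≥ 1 and functions p, p', p'' : Fin n → L with values in P such that for each i: p i ≺ p' i, p' i ≺ p'' i and p'' i ∈ U, and moreover b ≤ ⨆ i, p i, (⨆ i, p i) ≺ (⨆ i, p' i), and (⨆ i, p' i) ≺ sSup U. -/

import Mathlib

/-- The well-inside relation of a frame: `b` is well inside `a` iff `bᶜ ⊔ a = ⊤`. -/
def WellInside {L : Type*} [Order.Frame L] (b a : L) : Prop := bᶜ ⊔ a = ⊤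

/-- A frame is regular if every element is the join of the elements well inside it. -/
def IsRegularFrame (L : Type*) [Order.Frame L] : Prop :=
  ∀ a : L, a = sSup {b | WellInside b a}

/-- A frame is compact if `⊤` is a compact element. -/
def IsCompactFrame (L : Type*) [Order.Frame L] : Prop :=
  ∀ S : Set L, ⊤ ≤ sSup S → ∃ T : Set L, T ⊆ S ∧ T.Finite ∧ ⊤ ≤ sSup T

/-- A subset `P` of a frame `L` is a basis if every element of `L` is the join
of the elements of `P` below it. -/
def IsBasis {L : Type*} [Order.Frame L] (P : Set L) : Prop :=
  ∀ a : L, a = sSup {p | p ∈ P ∧ p ≤ a}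

/-- Monotonicity of well-inside in the right argument. -/
lemma wi_mono_right {L : Type*} [Order.Frame L] {b a a' : L}
    (h : WellInside b a) (ha : a ≤ a') : WellInside b a' :=
  top_le_iff.mp (h ▸ sup_le_sup_left ha _)

/-- Antitonicity of well-inside in the left argument. -/
lemma wi_anti_left {L : Type*} [Order.Frame L] {b b' a : L}
    (hb : b' ≤ b) (h : WellInside b a) : WellInside b' a :=
  top_le_iff.mp (h ▸ sup_le_sup_right (compl_le_compl hb) _)

/-- Finite joins preserve the well-inside relation. -/
lemma wi_iSup {L : Type*} [Order.Frame L] {n : ℕ} {p q : Fin n → L}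
    (h : ∀ i, WellInside (p i) (q i)) : WellInside (⨆ i, p i) (⨆ i, q i) := by
  have h1 : (⨅ i, (p i)ᶜ) ≤ (⨆ i, p i)ᶜ := by
    rw [le_compl_iff_disjoint_right, disjoint_iff, inf_iSup_eq]
    simp only [iSup_eq_bot]
    intro i
    have h0 : (⨅ j, (p j)ᶜ) ⊓ p i ≤ (p i)ᶜ ⊓ p i := inf_le_inf_right _ (iInf_le _ i)
    exact le_bot_iff.mp (h0.trans (compl_inf_self (p i)).le)
  have h2 : (⊤ : L) ≤ (⨅ i, (p i)ᶜ) ⊔ ⨆ i, q i := by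
    have : ((Finset.univ : Finset (Fin n)).inf fun i => (p i)ᶜ) ⊔ (⨆ i, q i) =
        (Finset.univ : Finset (Fin n)).inf fun i => (p i)ᶜ ⊔ ⨆ i, q i :=
      Finset.inf_sup_distrib_right _ _ _
    have heq : (⨅ i, (p i)ᶜ) = (Finset.univ : Finset (Fin n)).inf fun i => (p i)ᶜ := by
      simp [Finset.inf_eq_iInf]
    rw [heq, this, Finset.le_inf_iff]
    intro i _
    exact le_of_eq (wi_mono_right (h i) (le_iSup q i)).symm
  exact top_le_iff.mp (h2.trans (sup_le_sup_right h1 _))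

/-- Lemma 4.5 of the paper: in a compact regular frame with a basis `P` closed
under binary meets and joins, any `b` well inside `sSup U` (with `U ⊆ P`) is
either `⊥` or covered by suitable finite families from `P`. -/
theorem compact_regular_cover_lemma
    {L : Type*} [Order.Frame L] (hc : IsCompactFrame L) (hr : IsRegularFrame L)
    (P : Set L) (hP : IsBasis P)
    (hmeet : ∀ x ∈ P, ∀ y ∈ P, x ⊓ y ∈ P) (hjoin : ∀ x ∈ P, ∀ y ∈ P, x ⊔ y ∈ P)
    (b : L) (U : Set L) (hU : U ⊆ P) (hb : WellInside b (sSup U)) :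
    b = ⊥ ∨
      ∃ (n : ℕ), 1 ≤ n ∧ ∃ p p' p'' : Fin n → L,
        (∀ i, p i ∈ P ∧ p' i ∈ P ∧ p'' i ∈ P) ∧
        (∀ i, WellInside (p i) (p' i) ∧ WellInside (p' i) (p'' i) ∧ p'' i ∈ U) ∧
        b ≤ (⨆ i, p i) ∧
        WellInside (⨆ i, p i) (⨆ i, p' i) ∧
        WellInside (⨆ i, p' i) (sSup U) := by
  -- every element is the sup of basis elements well inside it
  have hA : ∀ u : L, u ≤ sSup {q | q ∈ P ∧ WellInside q u} := by
    intro u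
    conv_lhs => rw [hr u]
    refine sSup_le fun x hx => ?_
    calc x = sSup {p | p ∈ P ∧ p ≤ x} := hP x
      _ ≤ sSup {q | q ∈ P ∧ WellInside q u} :=
        sSup_le_sSup fun p hp => ⟨hp.1, wi_anti_left hp.2 hx⟩
  set V : Set L := {p | p ∈ P ∧ ∃ p', p' ∈ P ∧ WellInside p p' ∧ ∃ u, u ∈ U ∧ WellInside p' u}
    with hVdef
  have hUV : sSup U ≤ sSup V := by
    refine sSup_le fun u hu => (hA u).trans (sSup_le fun q hq => ?_)
    refine (hA q).trans (sSup_le fun r hr' => le_sSup ?_)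
    exact ⟨hr'.1, q, hq.1, hr'.2, u, hu, hq.2⟩
  have htop : (⊤ : L) ≤ sSup ({bᶜ} ∪ V) := by
    rw [sSup_union, sSup_singleton]
    calc (⊤ : L) = bᶜ ⊔ sSup U := hb.symm
      _ ≤ bᶜ ⊔ sSup V := sup_le_sup_left hUV _
  obtain ⟨T, hTsub, hTfin, hTtop⟩ := hc _ htop
  set T' : Set L := T \ {bᶜ} with hT'def
  have hT'fin : T'.Finite := hTfin.diff
  have hT'V : T' ⊆ V := fun x hx => (hTsub hx.1).resolve_left hx.2
  have hbT : b ≤ sSup T' := by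
    have h1 : sSup T ≤ bᶜ ⊔ sSup T' := by
      refine sSup_le fun x hx => ?_
      by_cases hxb : x = bᶜ
      · exact hxb ▸ le_sup_left
      · exact le_sup_of_le_right (le_sSup ⟨hx, hxb⟩)
    have h2 : (⊤ : L) ≤ bᶜ ⊔ sSup T' := hTtop.trans h1
    calc b = b ⊓ ⊤ := (inf_top_eq b).symm
      _ ≤ b ⊓ (bᶜ ⊔ sSup T') := inf_le_inf_left _ h2
      _ = (b ⊓ bᶜ) ⊔ (b ⊓ sSup T') := inf_sup_left _ _ _
      _ ≤ sSup T' := by rw [inf_compl_self]; simp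
  rcases T'.eq_empty_or_nonempty with hT'e | hT'ne
  · left
    rw [hT'e, sSup_empty, le_bot_iff] at hbT
    exact hbT
  · right
    obtain ⟨n, f, hf⟩ := hT'fin.fin_embedding
    have hn : 1 ≤ n := by
      rcases hT'ne with ⟨x, hx⟩
      rw [← hf] at hx
      obtain ⟨i, -⟩ := hx
      exact i.pos
    have hfV : ∀ i, (f i : L) ∈ V := fun i => hT'V (hf ▸ Set.mem_range_self i)
    choose hfP p' hp'P hwi1 p'' hp''U hwi2 using hfV
    have hsup : (⨆ i, (f i : L)) = sSup T' := by rw [← hf, sSup_range]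
    haveI : Nonempty (Fin n) := ⟨⟨0, hn⟩⟩
    refine ⟨n, hn, (fun i => f i), p', p'', fun i => ⟨hfP i, hp'P i, hU (hp''U i)⟩,
      fun i => ⟨hwi1 i, hwi2 i, hp''U i⟩, hsup ▸ hbT, wi_iSup hwi1, ?_⟩
    have : ∀ i, WellInside (p' i) (sSup U) :=
      fun i => wi_mono_right (hwi2 i) (le_sSup (hp''U i))
    have h3 : WellInside (⨆ i, p' i) (⨆ i : Fin n, sSup U) := wi_iSup this
    rwa [iSup_const] at h3
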